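/- Let W be a real Hilbert space, and for each t let V_t : W → ℝ be differentiable, α-strongly convex and η-smooth (α ≤ η). Given sequences defined by w_{t+1} = w_t − γ_t ∇V_t(w_t) and w'_{t+1} = w'_t − γ_t ∇V_t(w⋆), where w⋆ is a common minimizer of all V_t and γ_t η²/α ≤ 1, the following holds: ‖w_{t+1} − w'_{t+1}‖² ≤ (1 − γ_t α)‖w_t − w'_t‖² + γ_t η‖w'_t − w⋆‖². -/

import Mathlib

open RealInnerProductSpace

theorem grad_min_zero' {W : Type*} [NormedAddCommGroup W] [InnerProductSpace ℝ W]
    (f : W → ℝ) (g : W → W) (η : ℝ) (hη : 0 < η)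
    (hsmooth : ∀ x y, f x ≤ f y + ⟪g y, x - y⟫ + η / 2 * ‖x - y‖ ^ 2)
    (wstar : W) (hmin : ∀ x, f wstar ≤ f x) : g wstar = 0 := by
  have h1 := hsmooth (wstar - (1/η) • g wstar) wstar
  have h2 := hmin (wstar - (1/η) • g wstar)
  rw [sub_sub_cancel_left] at h1
  rw [inner_neg_right, real_inner_smul_right, real_inner_self_eq_norm_sq, norm_neg, norm_smul] at h1
  have h3 : η / 2 * (‖(1:ℝ)/η‖ * ‖g wstar‖) ^ 2 = 1/η / 2 * ‖g wstar‖ ^ 2 := by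
    rw [Real.norm_eq_abs, abs_of_pos (by positivity : (0:ℝ) < 1/η)]; field_simp
  rw [h3] at h1
  have h4 : 1/η * ‖g wstar‖^2 = 0 := le_antisymm (by linarith) (by positivity)
  rcases mul_eq_zero.mp h4 with h|h
  · exact absurd h (by positivity)
  · simpa using pow_eq_zero_iff (by norm_num) |>.mp h

theorem S_ineq' {W : Type*} [NormedAddCommGroup W] [InnerProductSpace ℝ W]
    (f : W → ℝ) (g : W → W) (α η : ℝ)
    (hstrong : ∀ x y, f y + ⟪g y, x - y⟫ + α / 2 * ‖x - y‖ ^ 2 ≤ f x)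
    (hsmooth : ∀ x y, f x ≤ f y + ⟪g y, x - y⟫ + η / 2 * ‖x - y‖ ^ 2)
    (wstar : W) (hg0 : g wstar = 0) (x : W) (s : ℝ) :
    (2*s - (η - α)*s^2) * ‖g x - α • (x - wstar)‖^2
      ≤ ⟪g x, x - wstar⟫ - α * ‖x - wstar‖^2 := by
  set u := x - wstar with hu
  set e := g x - α • u with he
  have h1 := hstrong (x - s • e) wstar
  have h2 := hsmooth (x - s • e) x
  have h3 := hstrong (wstar + s • e) x
  have h4 := hsmooth (wstar + s • e) wstar
  rw [hg0] at h1 h4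
  have id1 : x - s • e - wstar = u - s • e := by rw [hu]; abel
  have id2 : x - s • e - x = -(s • e) := by abel
  have id3 : wstar + s • e - x = s • e - u := by rw [hu]; abel
  have id4 : wstar + s • e - wstar = s • e := by abel
  rw [id1] at h1
  rw [id2] at h2
  rw [id3] at h3
  rw [id4] at h4
  have e1 : ‖u - s • e‖^2 = ‖u‖^2 - 2*s*⟪u, e⟫ + s^2*‖e‖^2 := by
    rw [norm_sub_sq_real, real_inner_smul_right, norm_smul, mul_pow, Real.norm_eq_abs, sq_abs]
    ring
  have e2 : ⟪g x, -(s • e)⟫ = -(s * ⟪g x, e⟫) := by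
    rw [inner_neg_right, real_inner_smul_right]
  have e3 : ‖-(s • e)‖^2 = s^2*‖e‖^2 := by
    rw [norm_neg, norm_smul, mul_pow, Real.norm_eq_abs, sq_abs]
  have e4 : ⟪g x, s • e - u⟫ = s * ⟪g x, e⟫ - ⟪g x, u⟫ := by
    rw [inner_sub_right, real_inner_smul_right]
  have e5 : ‖s • e - u‖^2 = s^2*‖e‖^2 - 2*s*⟪e, u⟫ + ‖u‖^2 := by
    rw [norm_sub_sq_real, norm_smul, mul_pow, Real.norm_eq_abs, sq_abs, real_inner_smul_left]
    ring
  have e6 : ‖s • e‖^2 = s^2*‖e‖^2 := by rw [norm_smul, mul_pow, Real.norm_eq_abs, sq_abs]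
  have e7 : ⟪g x, e⟫ = ‖e‖^2 + α * ⟪u, e⟫ := by
    have hgx : g x = e + α • u := by rw [he]; abel
    nth_rewrite 1 [hgx]
    rw [inner_add_left, real_inner_smul_left, real_inner_self_eq_norm_sq]
  have e8 : ⟪e, u⟫ = ⟪u, e⟫ := real_inner_comm _ _
  have e9 : ⟪u, e⟫ = ⟪g x, u⟫ - α * ‖u‖^2 := by
    rw [he, inner_sub_right, real_inner_smul_right, real_inner_self_eq_norm_sq,
      real_inner_comm]
  rw [e1] at h1
  rw [e2, e3, e7] at h2
  rw [e4, e5, e7, e8] at h3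
  rw [e6] at h4
  rw [inner_zero_left] at h1 h4
  rw [← e9]
  linarith [h1, h2, h3, h4]

theorem F1_ineq {W : Type*} [NormedAddCommGroup W] [InnerProductSpace ℝ W]
    (f : W → ℝ) (g : W → W) (α η : ℝ) (hαη : α ≤ η)
    (hstrong : ∀ x y, f y + ⟪g y, x - y⟫ + α / 2 * ‖x - y‖ ^ 2 ≤ f x)
    (hsmooth : ∀ x y, f x ≤ f y + ⟪g y, x - y⟫ + η / 2 * ‖x - y‖ ^ 2)
    (wstar : W) (hg0 : g wstar = 0) (x : W) :
    ‖g x - α • (x - wstar)‖^2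
      ≤ (η - α) * (⟪g x, x - wstar⟫ - α * ‖x - wstar‖^2) := by
  rcases eq_or_lt_of_le hαη with heq | hlt
  · subst heq
    have hE : ‖g x - α • (x - wstar)‖^2 ≤ 0 := by
      by_contra hpos
      push_neg at hpos
      set E2 := ‖g x - α • (x - wstar)‖^2 with hE2
      set R := ⟪g x, x - wstar⟫ - α * ‖x - wstar‖^2 with hR
      have hS := S_ineq' f g α α hstrong hsmooth wstar hg0 x ((R + 1)/(2*E2))
      rw [sub_self, zero_mul, sub_zero, ← hR, ← hE2] at hS
      have hc : 2 * ((R + 1)/(2*E2)) * E2 = R + 1 := by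
        field_simp
      rw [hc] at hS
      linarith
    rw [sub_self, zero_mul]
    exact hE
  · have hS := S_ineq' f g α η hstrong hsmooth wstar hg0 x (1/(η-α))
    have hne : η - α ≠ 0 := by linarith
    have hc : 2*(1/(η-α)) - (η - α)*(1/(η-α))^2 = 1/(η-α) := by
      field_simp; ring
    rw [hc] at hS
    rw [div_mul_eq_mul_div, one_mul, div_le_iff₀ (by linarith : (0:ℝ) < η - α)] at hS
    linarith [hS]

theorem F2_ineq {W : Type*} [NormedAddCommGroup W] [InnerProductSpace ℝ W]
    (f : W → ℝ) (g : W → W) (η : ℝ) (hη : 0 < η)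
    (hsmooth : ∀ x y, f x ≤ f y + ⟪g y, x - y⟫ + η / 2 * ‖x - y‖ ^ 2)
    (wstar : W) (hmin : ∀ x, f wstar ≤ f x) (hg0 : g wstar = 0) (x : W) :
    ‖g x‖^2 ≤ η^2 * ‖x - wstar‖^2 := by
  have h1 := hmin (x - (1/η) • g x)
  have h2 := hsmooth (x - (1/η) • g x) x
  have h3 := hsmooth x wstar
  rw [hg0, inner_zero_left] at h3
  rw [sub_sub_cancel_left, inner_neg_right, real_inner_smul_right,
    real_inner_self_eq_norm_sq, norm_neg, norm_smul] at h2
  have h4 : η / 2 * (‖(1:ℝ)/η‖ * ‖g x‖) ^ 2 = 1/η / 2 * ‖g x‖ ^ 2 := by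
    rw [Real.norm_eq_abs, abs_of_pos (by positivity : (0:ℝ) < 1/η)]; field_simp
  rw [h4] at h2
  -- from h1, h2, h3 : (1/(2η)) ‖g x‖^2 ≤ η/2 ‖x - wstar‖^2
  have h5 : 1/η/2 * ‖g x‖^2 ≤ η/2 * ‖x - wstar‖^2 := by linarith
  have h6 : η * (1/η/2 * ‖g x‖^2) ≤ η * (η/2 * ‖x - wstar‖^2) :=
    mul_le_mul_of_nonneg_left h5 hη.le
  have h7 : η * (1/η/2 * ‖g x‖^2) = ‖g x‖^2 / 2 := by field_simp
  rw [h7] at h6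
  nlinarith [h6]

set_option maxHeartbeats 1000000 in
theorem one_step_coupled_recursion
    {W : Type*} [NormedAddCommGroup W] [InnerProductSpace ℝ W] [CompleteSpace W]
    (V : ℕ → W → ℝ) (gradV : ℕ → W → W)
    (hgrad : ∀ t x, HasGradientAt (V t) (gradV t x) x)
    (α η : ℝ) (hα : 0 < α) (hαη : α ≤ η)
    (hstrong : ∀ t x y, V t y + ⟪gradV t y, x - y⟫ + α / 2 * ‖x - y‖ ^ 2 ≤ V t x)
    (hsmooth : ∀ t x y, V t x ≤ V t y + ⟪gradV t y, x - y⟫ + η / 2 * ‖x - y‖ ^ 2)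
    (wstar : W) (hmin : ∀ t x, V t wstar ≤ V t x)
    (γ : ℕ → ℝ) (hγpos : ∀ t, 0 < γ t) (hγ : ∀ t, γ t * η ^ 2 / α ≤ 1)
    (w w' : ℕ → W)
    (hw : ∀ t, w (t + 1) = w t - γ t • gradV t (w t))
    (hw' : ∀ t, w' (t + 1) = w' t - γ t • gradV t wstar) :
    ∀ t, ‖w (t + 1) - w' (t + 1)‖ ^ 2 ≤
      (1 - γ t * α) * ‖w t - w' t‖ ^ 2 + γ t * η * ‖w' t - wstar‖ ^ 2 := by
  intro t
  have hη : 0 < η := lt_of_lt_of_le hα hαη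
  have hγα : γ t * η ^ 2 ≤ α := by
    have h := hγ t
    rw [div_le_one hα] at h
    exact h
  have hg0 : gradV t wstar = 0 :=
    grad_min_zero' (V t) (gradV t) η hη (hsmooth t) wstar (hmin t)
  -- notation
  set x := w t with hx
  set x' := w' t with hx'
  set u := x - wstar with hu
  set b := x' - wstar with hb
  set gx := gradV t x with hgx
  set e := gx - α • u with he
  -- scalar facts
  have F1 : ‖e‖^2 ≤ (η - α) * (⟪gx, u⟫ - α * ‖u‖^2) :=
    F1_ineq (V t) (gradV t) α η hαη (hstrong t) (hsmooth t) wstar hg0 x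
  have F2 : ‖gx‖^2 ≤ η^2 * ‖u‖^2 :=
    F2_ineq (V t) (gradV t) η hη (hsmooth t) wstar (hmin t) hg0 x
  have hE2 : ‖e‖^2 = ‖gx‖^2 - 2*α*⟪gx, u⟫ + α^2*‖u‖^2 := by
    rw [he, norm_sub_sq_real, real_inner_smul_right, norm_smul, mul_pow,
      Real.norm_eq_abs, sq_abs]
    ring
  have hc : ‖gx‖^2 + α*η*‖u‖^2 ≤ (α+η)*⟪gx, u⟫ := by
    nlinarith [F1, hE2, sq_nonneg ‖e‖]
  have F3 : ‖gx‖^2 ≤ η * ⟪gx, u⟫ := by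
    have c2 : α*‖gx‖^2 ≤ α*(η^2*‖u‖^2) := mul_le_mul_of_nonneg_left F2 hα.le
    have c3 : η*(‖gx‖^2 + α*η*‖u‖^2) ≤ η*((α+η)*⟪gx, u⟫) :=
      mul_le_mul_of_nonneg_left hc hη.le
    have hαη0 : (0:ℝ) < α + η := by linarith
    by_contra hcon
    push_neg at hcon
    have := mul_pos hαη0 (by linarith : (0:ℝ) < ‖gx‖^2 - η * ⟪gx, u⟫)
    nlinarith [this, c2, c3]
  have hP0 : 0 ≤ ⟪gx, u⟫ := by nlinarith [F3, sq_nonneg ‖gx‖, hη]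
  have hγη : γ t * η ≤ 1 := by nlinarith [hγα, hαη, hη, hγpos t]
  have hPγ : γ t * ‖gx‖^2 ≤ ⟪gx, u⟫ := by
    have m1 : γ t * ‖gx‖^2 ≤ γ t * (η * ⟪gx, u⟫) :=
      mul_le_mul_of_nonneg_left F3 (hγpos t).le
    have m2 : γ t * η * ⟪gx, u⟫ ≤ ⟪gx, u⟫ := by nlinarith [hγη, hP0]
    linarith [m1, m2]
  -- relations between vectors
  have rA : ‖x - x'‖^2 = ‖u‖^2 - 2*⟪u, b⟫ + ‖b‖^2 := by
    have hxx : x - x' = u - b := by rw [hu, hb]; abel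
    rw [hxx, norm_sub_sq_real]
  have hEb : ⟪gx, b⟫ = ⟪e, b⟫ + α * ⟪u, b⟫ := by
    rw [he, inner_sub_left, real_inner_smul_left]; ring
  have hCS : ⟪e, b⟫ ≤ ‖e‖ * ‖b‖ := real_inner_le_norm e b
  -- the key scalar inequality
  have KEY : α*‖u‖^2 + γ t*‖gx‖^2 + 2*⟪e, b⟫ - 2*⟪gx, u⟫ + (α - η)*‖b‖^2 ≤ 0 := by
    rcases eq_or_lt_of_le hαη with heq | hlt
    · -- α = η : e = 0
      subst heq
      rw [sub_self, zero_mul] at F1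
      have hE0 : ‖e‖ = 0 := by
        have := norm_nonneg e
        nlinarith [F1, norm_nonneg e]
      have hev : e = 0 := norm_eq_zero.mp hE0
      have hgxv : gx = α • u := by
        have h' := hev; rw [he] at h'; rwa [sub_eq_zero] at h'
      have hPu : ⟪gx, u⟫ = α * ‖u‖^2 := by
        rw [hgxv, real_inner_smul_left, real_inner_self_eq_norm_sq]
      have hPb : ⟪e, b⟫ = 0 := by rw [hev, inner_zero_left]
      have hG2 : ‖gx‖^2 = α^2 * ‖u‖^2 := by
        rw [hgxv, norm_smul, mul_pow, Real.norm_eq_abs, sq_abs]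
      have hγα1 : γ t * α ≤ 1 := by nlinarith [hγα, hα]
      rw [hPu, hPb, hG2]
      nlinarith [mul_nonneg (mul_nonneg hα.le (sq_nonneg ‖u‖)) (sub_nonneg.mpr hγα1)]
    · -- α < η
      have hd : (0:ℝ) < η - α := by linarith
      have q1 : 2*((η-α)*⟪e, b⟫) ≤ 2*((η-α)*(‖e‖*‖b‖)) := by
        have := mul_le_mul_of_nonneg_left hCS hd.le
        linarith
      have q2 : 2*((η-α)*(‖e‖*‖b‖)) ≤ (η-α)^2*‖b‖^2 + ‖e‖^2 := by
        nlinarith [sq_nonneg ((η-α)*‖b‖ - ‖e‖)]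
      have q3 : (η-α)*(γ t * ‖gx‖^2) ≤ (η-α)*⟪gx, u⟫ :=
        mul_le_mul_of_nonneg_left hPγ hd.le
      by_contra hK
      push_neg at hK
      have hK2 : 0 < (η-α) * (α*‖u‖^2 + γ t*‖gx‖^2 + 2*⟪e, b⟫ - 2*⟪gx, u⟫ + (α - η)*‖b‖^2) :=
        mul_pos hd hK
      nlinarith [hK2, q1, q2, F1, q3]
  -- assemble
  rw [hw t, hw' t, hg0, smul_zero, sub_zero]
  have idA : x - γ t • gx - x' = (x - x') - γ t • gx := by rw [hx, hx']; abel
  rw [idA, norm_sub_sq_real, real_inner_smul_right, norm_smul, mul_pow,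
    Real.norm_eq_abs, sq_abs]
  have raG : ⟪x - x', gx⟫ = ⟪gx, u⟫ - ⟪gx, b⟫ := by
    have hxx : x - x' = u - b := by rw [hu, hb]; abel
    rw [hxx, inner_sub_left, real_inner_comm u gx, real_inner_comm b gx]
  rw [raG, hEb, rA]
  have hfin := mul_le_mul_of_nonneg_left KEY (hγpos t).le
  rw [mul_zero] at hfin
  nlinarith [hfin]
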